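/- Let A(B)^C be a C-Galois extension with canonical entwining map ψ. Then the group Aut(A(B)^C) of left B-module, right C-comodule automorphisms of A (with product F·G = G∘F) is isomorphic to the group C(A) of convolution invertible linear maps f : C → A satisfying ψ(c₍₁₎ ⊗ f(c₍₂₎)) = f(c₍₁₎) ⊗ c₍₂₎ for all c ∈ C, with product the convolution product. The isomorphism is f ↦ (a ↦ a₍₀₎ f(a₍₁₎)). -/
import Mathlib


open TensorProduct LinearMap
set_option linter.unusedSectionVars false
set_option maxHeartbeats 1000000

/-- An entwining structure `(A, C)_ψ`. -/
structure Entwining (k A C : Type) [Field k] [Ring A] [Algebra k A]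
    [AddCommGroup C] [Module k C] [Coalgebra k C] where
  ψ : C ⊗[k] A →ₗ[k] A ⊗[k] C
  entw_mul : ψ ∘ₗ (mul' k A).lTensor C =
    (mul' k A).rTensor C ∘ₗ (TensorProduct.assoc k A A C).symm.toLinearMap ∘ₗ
      ψ.lTensor A ∘ₗ (TensorProduct.assoc k A C A).toLinearMap ∘ₗ
      ψ.rTensor A ∘ₗ (TensorProduct.assoc k C A A).symm.toLinearMap
  entw_unit : ∀ c : C, ψ (c ⊗ₜ[k] 1) = 1 ⊗ₜ[k] c
  entw_comul : (Coalgebra.comul (R := k) (A := C)).lTensor A ∘ₗ ψ =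
    (TensorProduct.assoc k A C C).toLinearMap ∘ₗ ψ.rTensor C ∘ₗ
      (TensorProduct.assoc k C A C).symm.toLinearMap ∘ₗ ψ.lTensor C ∘ₗ
      (TensorProduct.assoc k C C A).toLinearMap ∘ₗ
      (Coalgebra.comul (R := k) (A := C)).rTensor A
  entw_counit : (TensorProduct.rid k A).toLinearMap ∘ₗ
      (Coalgebra.counit (R := k) (A := C)).lTensor A ∘ₗ ψ =
    (TensorProduct.lid k A).toLinearMap ∘ₗ (Coalgebra.counit (R := k) (A := C)).rTensor A

/-- A right `C`-comodule structure on `V`. -/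
structure RComod (k C V : Type) [Field k] [AddCommGroup C] [Module k C] [Coalgebra k C]
    [AddCommGroup V] [Module k V] where
  ρ : V →ₗ[k] V ⊗[k] C
  coassoc : (Coalgebra.comul (R := k) (A := C)).lTensor V ∘ₗ ρ =
    (TensorProduct.assoc k V C C).toLinearMap ∘ₗ ρ.rTensor C ∘ₗ ρ
  counit_id : (TensorProduct.rid k V).toLinearMap ∘ₗ
      (Coalgebra.counit (R := k) (A := C)).lTensor V ∘ₗ ρ = LinearMap.id

/-- A left `C`-comodule structure on `V`. -/
structure LComod (k C V : Type) [Field k] [AddCommGroup C] [Module k C] [Coalgebra k C]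
    [AddCommGroup V] [Module k V] where
  ρ : V →ₗ[k] C ⊗[k] V
  coassoc : (Coalgebra.comul (R := k) (A := C)).rTensor V ∘ₗ ρ =
    (TensorProduct.assoc k C C V).symm.toLinearMap ∘ₗ ρ.lTensor C ∘ₗ ρ
  counit_id : (TensorProduct.lid k V).toLinearMap ∘ₗ
      (Coalgebra.counit (R := k) (A := C)).rTensor V ∘ₗ ρ = LinearMap.id

/-- A right `A`-module structure (`k`-linear) on `M`. -/
structure RAct (k A M : Type) [Field k] [Ring A] [Algebra k A]
    [AddCommGroup M] [Module k M] where
  act : M ⊗[k] A →ₗ[k] M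
  act_one : ∀ m : M, act (m ⊗ₜ[k] 1) = m
  act_mul : ∀ (m : M) (a b : A),
    act (act (m ⊗ₜ[k] a) ⊗ₜ[k] b) = act (m ⊗ₜ[k] (a * b))

variable {k A C M : Type} [Field k] [Ring A] [Algebra k A]
  [AddCommGroup C] [Module k C] [Coalgebra k C] [AddCommGroup M] [Module k M]

/-- The compatibility condition making `M` an entwined `(A,C)_ψ`-module. -/
def EntwCompat (E : Entwining k A C) (α : RAct k A M) (ρM : RComod k C M) : Prop :=
  ρM.ρ ∘ₗ α.act = α.act.rTensor C ∘ₗ (TensorProduct.assoc k M A C).symm.toLinearMap ∘ₗ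
    E.ψ.lTensor M ∘ₗ (TensorProduct.assoc k M C A).toLinearMap ∘ₗ ρM.ρ.rTensor A

/-- The `A`-action on `M ⊗ C` induced by an entwining: `(m⊗c)·a = m·a_α ⊗ c^α`. -/
noncomputable def entwAct (E : Entwining k A C) (ν : M ⊗[k] A →ₗ[k] M) :
    (M ⊗[k] C) ⊗[k] A →ₗ[k] M ⊗[k] C :=
  ν.rTensor C ∘ₗ (TensorProduct.assoc k M A C).symm.toLinearMap ∘ₗ
    E.ψ.lTensor M ∘ₗ (TensorProduct.assoc k M C A).toLinearMap

/-- The `C`-coaction `M ⊗ Δ` on `M ⊗ C`. -/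
noncomputable def coactMC (k C M : Type) [Field k] [AddCommGroup C] [Module k C]
    [Coalgebra k C] [AddCommGroup M] [Module k M] :
    M ⊗[k] C →ₗ[k] (M ⊗[k] C) ⊗[k] C :=
  (TensorProduct.assoc k M C C).symm.toLinearMap ∘ₗ
    (Coalgebra.comul (R := k) (A := C)).lTensor M

/-- The coaction on `V ⊗ A` induced by an entwining: `v⊗a ↦ v₍₀₎ ⊗ ψ(v₍₁₎⊗a)`. -/
noncomputable def entwCoact {V : Type} [AddCommGroup V] [Module k V]
    (E : Entwining k A C) (ρV : V →ₗ[k] V ⊗[k] C) :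
    V ⊗[k] A →ₗ[k] (V ⊗[k] A) ⊗[k] C :=
  (TensorProduct.assoc k V A C).symm.toLinearMap ∘ₗ E.ψ.lTensor V ∘ₗ
    (TensorProduct.assoc k V C A).toLinearMap ∘ₗ ρV.rTensor A

/-- The action `V ⊗ μ` on `V ⊗ A`. -/
noncomputable def actVA (k : Type) (A V : Type) [Field k] [Ring A] [Algebra k A]
    [AddCommGroup V] [Module k V] :
    (V ⊗[k] A) ⊗[k] A →ₗ[k] V ⊗[k] A :=
  (mul' k A).lTensor V ∘ₗ (TensorProduct.assoc k V A A).toLinearMap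

/-- The canonical map `A ⊗ₖ A → A ⊗ C`, `a ⊗ a' ↦ a a'₍₀₎ ⊗ a'₍₁₎`. -/
noncomputable def canHat (ΔA : A →ₗ[k] A ⊗[k] C) : A ⊗[k] A →ₗ[k] A ⊗[k] C :=
  (mul' k A).rTensor C ∘ₗ (TensorProduct.assoc k A A C).symm.toLinearMap ∘ₗ ΔA.lTensor A

/-- The subspace of relations defining `A ⊗_B A` inside `A ⊗ₖ A`. -/
noncomputable def relSub (k : Type) [Field k] {A : Type} [Ring A] [Algebra k A]
    (B : Set A) : Submodule k (A ⊗[k] A) :=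
  Submodule.span k {x | ∃ a a' b : A, b ∈ B ∧ x = (a * b) ⊗ₜ[k] a' - a ⊗ₜ[k] (b * a')}

/-- Convolution product of `f g : C → A`. -/
noncomputable def conv (f g : C →ₗ[k] A) : C →ₗ[k] A :=
  mul' k A ∘ₗ TensorProduct.map f g ∘ₗ Coalgebra.comul (R := k)

/-- The convolution unit `η ∘ ε`. -/
noncomputable def convUnit (k C A : Type) [Field k] [Ring A] [Algebra k A]
    [AddCommGroup C] [Module k C] [Coalgebra k C] : C →ₗ[k] A :=
  Algebra.linearMap k A ∘ₗ Coalgebra.counit (R := k)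

variable (k) in
/-- The subalgebra-defining set `B = {b ∈ A : ∀ a, Δ_A(ba) = bΔ_A(a)}`. -/
noncomputable def coinvB (ΔA : A →ₗ[k] A ⊗[k] C) : Set A :=
  {b | ∀ a : A, ΔA (b * a) = (LinearMap.mulLeft k b).rTensor C (ΔA a)}

/-- `A` as a right module over itself. -/
noncomputable def mulRAct (k A : Type) [Field k] [Ring A] [Algebra k A] : RAct k A A where
  act := mul' k A
  act_one := fun m => by simp [LinearMap.mul'_apply]
  act_mul := fun m a b => by simp [LinearMap.mul'_apply, mul_assoc]

----------------------------------------------------------------------------------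
-- auxiliary development

lemma pre_mul (x : A) (z : A ⊗[k] C) :
    (mul' k A).rTensor C ((TensorProduct.assoc k A A C).symm (x ⊗ₜ[k] z)) =
      (mulLeft k x).rTensor C z := by
  induction z using TensorProduct.induction_on with
  | zero => simp
  | tmul y c => simp [mul'_apply]
  | add u v hu hv => simp only [tmul_add, map_add, hu, hv]

noncomputable def Wm {N : Type} [AddCommGroup N] [Module k N]
    (q : N →ₗ[k] A ⊗[k] C) : A ⊗[k] N →ₗ[k] A ⊗[k] C :=
  (mul' k A).rTensor C ∘ₗ (TensorProduct.assoc k A A C).symm.toLinearMap ∘ₗ q.lTensor A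

lemma Wm_tmul {N : Type} [AddCommGroup N] [Module k N]
    (q : N →ₗ[k] A ⊗[k] C) (x : A) (n : N) :
    Wm q (x ⊗ₜ[k] n) = (mulLeft k x).rTensor C (q n) := by
  simp [Wm, pre_mul]

lemma Wm_comp {N P : Type} [AddCommGroup N] [Module k N] [AddCommGroup P] [Module k P]
    (q : P →ₗ[k] A ⊗[k] C) (r : N →ₗ[k] P) :
    Wm (q ∘ₗ r) = Wm q ∘ₗ r.lTensor A := by
  simp only [Wm, lTensor_comp]; rfl

lemma ellN_one {N : Type} [AddCommGroup N] [Module k N] (z : A ⊗[k] N) :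
    (mulLeft k (1:A)).rTensor N z = z := by
  rw [mulLeft_one, rTensor_id]; rfl

lemma ellN_mul {N : Type} [AddCommGroup N] [Module k N] (x y : A) (z : A ⊗[k] N) :
    (mulLeft k x).rTensor N ((mulLeft k y).rTensor N z) = (mulLeft k (x*y)).rTensor N z := by
  rw [mulLeft_mul, rTensor_comp]; rfl

lemma Wm_one (q : C →ₗ[k] A ⊗[k] C) (c : C) : Wm q ((1:A) ⊗ₜ[k] c) = q c := by
  rw [Wm_tmul, ellN_one]

lemma Wm_ell {N : Type} [AddCommGroup N] [Module k N]
    (q : N →ₗ[k] A ⊗[k] C) (x : A) (z : A ⊗[k] N) :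
    Wm q ((mulLeft k x).rTensor N z) = (mulLeft k x).rTensor C (Wm q z) := by
  induction z using TensorProduct.induction_on with
  | zero => simp
  | tmul y n => simp only [rTensor_tmul, mulLeft_apply, Wm_tmul, ellN_mul]
  | add u v hu hv => simp only [map_add, hu, hv]

lemma Wm_mk_one (z : A ⊗[k] C) : Wm (TensorProduct.mk k A C 1) z = z := by
  induction z using TensorProduct.induction_on with
  | zero => simp
  | tmul y c => simp [Wm_tmul, mul'_apply]
  | add u v hu hv => simp only [map_add, hu, hv]

lemma mul_lTensor_ell {N : Type} [AddCommGroup N] [Module k N]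
    (g : N →ₗ[k] A) (x : A) (z : A ⊗[k] N) :
    mul' k A (g.lTensor A ((mulLeft k x).rTensor N z)) = x * mul' k A (g.lTensor A z) := by
  induction z using TensorProduct.induction_on with
  | zero => simp
  | tmul y n => simp [mul'_apply, mul_assoc]
  | add u v hu hv => simp only [map_add, hu, hv, mul_add]

----------------------------------------------------------------------------------
-- canonical map lemmas

lemma canHat_eq_Wm (ρ : A →ₗ[k] A ⊗[k] C) : canHat ρ = Wm ρ := rfl

lemma can_tmul (ρ : A →ₗ[k] A ⊗[k] C) (a a' : A) :
    canHat ρ (a ⊗ₜ[k] a') = (mulLeft k a).rTensor C (ρ a') := by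
  rw [canHat_eq_Wm, Wm_tmul]

/-- `Θ` as a standalone function. -/
noncomputable def Th (ρ : A →ₗ[k] A ⊗[k] C) (f : C →ₗ[k] A) : A →ₗ[k] A :=
  mul' k A ∘ₗ f.lTensor A ∘ₗ ρ

-- the entwined-module hypothesis, pointwise
lemma hE_pt (E : Entwining k A C) (ΔA : RComod k C A)
    (hE : EntwCompat E (mulRAct k A) ΔA) (u : A ⊗[k] A) :
    ΔA.ρ (mul' k A u) = entwAct E (mul' k A) (ΔA.ρ.rTensor A u) := by
  have h := hE
  unfold EntwCompat at h
  have h2 := DFunLike.congr_fun h u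
  simpa [mulRAct, entwAct, comp_apply] using h2

lemma Phi_tmul (E : Entwining k A C) (x : A) (c : C) (b : A) :
    entwAct E (mul' k A) ((x ⊗ₜ[k] c) ⊗ₜ[k] b) =
      (mulLeft k x).rTensor C (E.ψ (c ⊗ₜ[k] b)) := by
  simp [entwAct, pre_mul]

----------------------------------------------------------------------------------
-- W1 / W2

lemma W1 (E : Entwining k A C) (ΔA : RComod k C A)
    (hE : EntwCompat E (mulRAct k A) ΔA) (f : C →ₗ[k] A) (a : A) :
    Wm (E.ψ ∘ₗ f.lTensor C ∘ₗ Coalgebra.comul (R := k)) (ΔA.ρ a) = ΔA.ρ (Th ΔA.ρ f a) := by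
  have s1 : Wm (E.ψ ∘ₗ f.lTensor C ∘ₗ Coalgebra.comul (R := k)) (ΔA.ρ a)
      = Wm (E.ψ ∘ₗ f.lTensor C)
          ((Coalgebra.comul (R := k) (A := C)).lTensor A (ΔA.ρ a)) := by
    rw [show E.ψ ∘ₗ f.lTensor C ∘ₗ Coalgebra.comul (R := k)
        = (E.ψ ∘ₗ f.lTensor C) ∘ₗ Coalgebra.comul (R := k) from rfl, Wm_comp]
    rfl
  have s2 := DFunLike.congr_fun ΔA.coassoc a
  simp only [comp_apply, LinearEquiv.coe_coe] at s2
  have s3 : ∀ w : (A ⊗[k] C) ⊗[k] C,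
      Wm (E.ψ ∘ₗ f.lTensor C) ((TensorProduct.assoc k A C C) w)
        = entwAct E (mul' k A) (f.lTensor (A ⊗[k] C) w) := by
    have : Wm (E.ψ ∘ₗ f.lTensor C) ∘ₗ (TensorProduct.assoc k A C C).toLinearMap
        = entwAct E (mul' k A) ∘ₗ f.lTensor (A ⊗[k] C) := by
      ext x c c'
      simp [Wm_tmul, Phi_tmul]
    intro w
    exact DFunLike.congr_fun this w
  have s4 : f.lTensor (A ⊗[k] C) (ΔA.ρ.rTensor C (ΔA.ρ a))
      = ΔA.ρ.rTensor A (f.lTensor A (ΔA.ρ a)) := by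
    have h : (f.lTensor (A ⊗[k] C)) ∘ₗ (ΔA.ρ.rTensor C)
        = (ΔA.ρ.rTensor A) ∘ₗ (f.lTensor A) := by
      rw [lTensor_comp_rTensor, rTensor_comp_lTensor]
    exact DFunLike.congr_fun h (ΔA.ρ a)
  rw [s1, s2, s3, s4, ← hE_pt E ΔA hE]
  rfl

lemma W2 (ΔA : RComod k C A) (f : C →ₗ[k] A) (a : A) :
    Wm (f.rTensor C ∘ₗ Coalgebra.comul (R := k)) (ΔA.ρ a)
      = (Th ΔA.ρ f).rTensor C (ΔA.ρ a) := by
  have s1 : Wm (f.rTensor C ∘ₗ Coalgebra.comul (R := k)) (ΔA.ρ a)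
      = Wm (f.rTensor C) ((Coalgebra.comul (R := k) (A := C)).lTensor A (ΔA.ρ a)) := by
    rw [Wm_comp]; rfl
  have s2 := DFunLike.congr_fun ΔA.coassoc a
  simp only [comp_apply, LinearEquiv.coe_coe] at s2
  have s3 : ∀ w : (A ⊗[k] C) ⊗[k] C,
      Wm (f.rTensor C) ((TensorProduct.assoc k A C C) w)
        = (mul' k A ∘ₗ f.lTensor A).rTensor C w := by
    have : Wm (f.rTensor C) ∘ₗ (TensorProduct.assoc k A C C).toLinearMap
        = (mul' k A ∘ₗ f.lTensor A).rTensor C := by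
      ext x c c'
      simp [Wm_tmul, mul'_apply]
    intro w; exact DFunLike.congr_fun this w
  rw [s1, s2, s3]
  have : (Th ΔA.ρ f).rTensor C = (mul' k A ∘ₗ f.lTensor A).rTensor C ∘ₗ ΔA.ρ.rTensor C := by
    rw [← rTensor_comp]; rfl
  rw [this]; rfl

lemma colinTh (E : Entwining k A C) (ΔA : RComod k C A)
    (hE : EntwCompat E (mulRAct k A) ΔA) (f : C →ₗ[k] A)
    (hcolf : E.ψ ∘ₗ f.lTensor C ∘ₗ Coalgebra.comul (R := k)
      = f.rTensor C ∘ₗ Coalgebra.comul (R := k)) :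
    ΔA.ρ ∘ₗ Th ΔA.ρ f = (Th ΔA.ρ f).rTensor C ∘ₗ ΔA.ρ := by
  ext a
  simp only [comp_apply]
  rw [← W1 E ΔA hE f a, hcolf, W2]

----------------------------------------------------------------------------------
-- cstar machinery

/-- `cstar p q (c) = p (c₁) ⋅ q (c₂)`, multiplication in the first tensor factor. -/
noncomputable def cstar (p : C →ₗ[k] A) (q : C →ₗ[k] A ⊗[k] C) : C →ₗ[k] A ⊗[k] C :=
  Wm q ∘ₗ p.rTensor C ∘ₗ Coalgebra.comul (R := k)

lemma cstar_unit_left (q : C →ₗ[k] A ⊗[k] C) : cstar (convUnit k C A) q = q := by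
  ext c
  have h := Coalgebra.rTensor_counit_comul (R := k) c
  simp only [cstar, convUnit, comp_apply, rTensor_comp, LinearMap.comp_apply] at *
  rw [h]
  simp only [rTensor_tmul, Algebra.linearMap_apply, map_one]
  rw [Wm_one]

lemma cstar_mk_right (p : C →ₗ[k] A) :
    cstar p (TensorProduct.mk k A C 1) = p.rTensor C ∘ₗ Coalgebra.comul (R := k) := by
  ext c
  simp only [cstar, comp_apply, Wm_mk_one]

lemma cstar_assoc (p q : C →ₗ[k] A) (r : C →ₗ[k] A ⊗[k] C) :
    cstar (conv p q) r = cstar p (cstar q r) := by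
  have key : Wm r ∘ₗ (mul' k A).rTensor C ∘ₗ (TensorProduct.map p q).rTensor C
      = Wm (Wm r) ∘ₗ (q.rTensor C).lTensor A ∘ₗ p.rTensor (C ⊗[k] C) ∘ₗ
          (TensorProduct.assoc k C C C).toLinearMap := by
    ext c₁ c₂ c₃
    simp only [TensorProduct.AlgebraTensorModule.curry_apply, TensorProduct.curry_apply,
      LinearMap.coe_restrictScalars, comp_apply, LinearEquiv.coe_coe, TensorProduct.assoc_tmul,
      TensorProduct.map_tmul, rTensor_tmul, lTensor_tmul, mul'_apply,
      Wm_tmul, ellN_mul]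
  ext c
  have hco := Coalgebra.coassoc_apply (R := k) c
  -- LHS
  have l1 : cstar (conv p q) r c
      = Wm r ((mul' k A).rTensor C ((TensorProduct.map p q).rTensor C
          ((Coalgebra.comul (R := k) (A := C)).rTensor C
            (Coalgebra.comul (R := k) c)))) := by
    simp only [cstar, conv, comp_apply, rTensor_comp]
  -- RHS
  have r1 : cstar p (cstar q r) c
      = Wm (Wm r) ((q.rTensor C).lTensor A
          ((Coalgebra.comul (R := k) (A := C)).lTensor A
            (p.rTensor C (Coalgebra.comul (R := k) c)))) := by
    simp only [cstar, comp_apply]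
    rw [show Wm r ∘ₗ q.rTensor C ∘ₗ Coalgebra.comul (R := k)
        = (Wm r ∘ₗ q.rTensor C) ∘ₗ Coalgebra.comul (R := k) from rfl, Wm_comp, Wm_comp]
    rfl
  have r2 : (Coalgebra.comul (R := k) (A := C)).lTensor A
        (p.rTensor C (Coalgebra.comul (R := k) c))
      = p.rTensor (C ⊗[k] C) ((TensorProduct.assoc k C C C)
          ((Coalgebra.comul (R := k) (A := C)).rTensor C (Coalgebra.comul (R := k) c))) := by
    rw [hco]
    have h : (Coalgebra.comul (R := k) (A := C)).lTensor A ∘ₗ p.rTensor C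
        = p.rTensor (C ⊗[k] C) ∘ₗ (Coalgebra.comul (R := k) (A := C)).lTensor C := by
      rw [lTensor_comp_rTensor, rTensor_comp_lTensor]
    exact DFunLike.congr_fun h (Coalgebra.comul (R := k) c)
  rw [l1, r1, r2]
  exact DFunLike.congr_fun key ((Coalgebra.comul (R := k) (A := C)).rTensor C
    (Coalgebra.comul (R := k) c))

----------------------------------------------------------------------------------
-- Step A and colinearity of the convolution inverse

lemma stepA (E : Entwining k A C) (f g : C →ₗ[k] A)
    (hcolf : E.ψ ∘ₗ f.lTensor C ∘ₗ Coalgebra.comul (R := k)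
      = f.rTensor C ∘ₗ Coalgebra.comul (R := k))
    (hfg : conv f g = convUnit k C A) :
    cstar f (E.ψ ∘ₗ g.lTensor C ∘ₗ Coalgebra.comul (R := k))
      = TensorProduct.mk k A C 1 := by
  ext c
  set Δc := Coalgebra.comul (R := k) c with hΔc
  set t := (Coalgebra.comul (R := k) (A := C)).rTensor C Δc with ht
  have hco : (TensorProduct.assoc k C C C) t
      = (Coalgebra.comul (R := k) (A := C)).lTensor C Δc := Coalgebra.coassoc_apply c
  -- step 1 : the common middle value
  have left : E.ψ ((conv f g).lTensor C Δc) = (1:A) ⊗ₜ[k] c := by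
    rw [hfg]
    have h1 : (convUnit k C A).lTensor C Δc = c ⊗ₜ[k] (1:A) := by
      rw [convUnit, lTensor_comp]
      simp only [comp_apply]
      rw [Coalgebra.lTensor_counit_comul (R := k) c]
      simp
    rw [h1, E.entw_unit]
  -- step 2 : expand via entw_mul
  have hexp : (conv f g).lTensor C Δc
      = (mul' k A).lTensor C ((TensorProduct.map f g).lTensor C
          ((TensorProduct.assoc k C C C) t)) := by
    rw [conv, lTensor_comp, lTensor_comp]
    simp only [comp_apply]
    rw [hco]
  have hm := DFunLike.congr_fun E.entw_mul
      ((TensorProduct.map f g).lTensor C ((TensorProduct.assoc k C C C) t))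
  simp only [comp_apply, LinearEquiv.coe_coe] at hm
  -- step 3 : the inner block is `map (ψ ∘ f.lTensor C) g`
  have K : (E.ψ.rTensor A) ∘ₗ (TensorProduct.assoc k C A A).symm.toLinearMap ∘ₗ
        (TensorProduct.map f g).lTensor C ∘ₗ (TensorProduct.assoc k C C C).toLinearMap
      = TensorProduct.map (E.ψ ∘ₗ f.lTensor C) g := by
    ext c₁ c₂ c₃
    simp only [TensorProduct.AlgebraTensorModule.curry_apply, TensorProduct.curry_apply,
      LinearMap.coe_restrictScalars, comp_apply, LinearEquiv.coe_coe,
      TensorProduct.assoc_tmul, lTensor_tmul, TensorProduct.map_tmul,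
      TensorProduct.assoc_symm_tmul, rTensor_tmul]
  have hKt := DFunLike.congr_fun K t
  simp only [comp_apply, LinearEquiv.coe_coe] at hKt
  -- step 4 : use colinearity of f on the first two factors of t
  have hmapco : TensorProduct.map (E.ψ ∘ₗ f.lTensor C) g ∘ₗ
        (Coalgebra.comul (R := k) (A := C)).rTensor C
      = TensorProduct.map (f.rTensor C) g ∘ₗ
        (Coalgebra.comul (R := k) (A := C)).rTensor C := by
    have e1 : ∀ (X : C ⊗[k] C →ₗ[k] A ⊗[k] C), TensorProduct.map X g ∘ₗ
        (Coalgebra.comul (R := k) (A := C)).rTensor C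
        = TensorProduct.map (X ∘ₗ Coalgebra.comul (R := k)) g := by
      intro X
      have : (Coalgebra.comul (R := k) (A := C)).rTensor C
          = TensorProduct.map (Coalgebra.comul (R := k) (A := C)) (LinearMap.id : C →ₗ[k] C) := rfl
      rw [this, ← TensorProduct.map_comp, comp_id]
    rw [e1, e1]
    have : (E.ψ ∘ₗ f.lTensor C) ∘ₗ Coalgebra.comul (R := k)
        = f.rTensor C ∘ₗ Coalgebra.comul (R := k) := hcolf
    rw [this]
  have hKt2 : E.ψ.rTensor A ((TensorProduct.assoc k C A A).symm
        ((TensorProduct.map f g).lTensor C ((TensorProduct.assoc k C C C) t)))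
      = TensorProduct.map (f.rTensor C) g t := by
    rw [hKt, ht]
    exact DFunLike.congr_fun hmapco Δc
  -- step 5 : the tail is `Wm`
  have tail : ∀ w : (C ⊗[k] C) ⊗[k] C,
      (mul' k A).rTensor C ((TensorProduct.assoc k A A C).symm
        (E.ψ.lTensor A ((TensorProduct.assoc k A C A)
          (TensorProduct.map (f.rTensor C) g w))))
      = Wm (E.ψ ∘ₗ g.lTensor C) (f.rTensor (C ⊗[k] C)
          ((TensorProduct.assoc k C C C) w)) := by
    have h : ((mul' k A).rTensor C ∘ₗ (TensorProduct.assoc k A A C).symm.toLinearMap ∘ₗ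
          E.ψ.lTensor A ∘ₗ (TensorProduct.assoc k A C A).toLinearMap ∘ₗ
          TensorProduct.map (f.rTensor C) g)
        = Wm (E.ψ ∘ₗ g.lTensor C) ∘ₗ f.rTensor (C ⊗[k] C) ∘ₗ
          (TensorProduct.assoc k C C C).toLinearMap := by
      ext c₁ c₂ c₃
      simp only [TensorProduct.AlgebraTensorModule.curry_apply, TensorProduct.curry_apply,
        LinearMap.coe_restrictScalars, comp_apply, LinearEquiv.coe_coe,
        TensorProduct.assoc_tmul, lTensor_tmul, TensorProduct.map_tmul,
        rTensor_tmul, Wm_tmul, pre_mul]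
    intro w
    have := DFunLike.congr_fun h w
    simp only [comp_apply, LinearEquiv.coe_coe] at this
    exact this
  -- step 6 : identify the goal's LHS
  have goal1 : cstar f (E.ψ ∘ₗ g.lTensor C ∘ₗ Coalgebra.comul (R := k)) c
      = Wm (E.ψ ∘ₗ g.lTensor C)
          ((Coalgebra.comul (R := k) (A := C)).lTensor A (f.rTensor C Δc)) := by
    simp only [cstar, comp_apply]
    rw [show E.ψ ∘ₗ g.lTensor C ∘ₗ Coalgebra.comul (R := k)
        = (E.ψ ∘ₗ g.lTensor C) ∘ₗ Coalgebra.comul (R := k) from rfl, Wm_comp]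
    rfl
  have goal2 : (Coalgebra.comul (R := k) (A := C)).lTensor A (f.rTensor C Δc)
      = f.rTensor (C ⊗[k] C) ((TensorProduct.assoc k C C C) t) := by
    have h : (Coalgebra.comul (R := k) (A := C)).lTensor A ∘ₗ f.rTensor C
        = f.rTensor (C ⊗[k] C) ∘ₗ (Coalgebra.comul (R := k) (A := C)).lTensor C := by
      rw [lTensor_comp_rTensor, rTensor_comp_lTensor]
    have h2 := DFunLike.congr_fun h Δc
    simp only [comp_apply] at h2
    rw [h2, hco]
  rw [goal1, goal2, ← tail t, ← hKt2, ← hm, ← hexp, left]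
  rfl

lemma colin_inv (E : Entwining k A C) (f g : C →ₗ[k] A)
    (hcolf : E.ψ ∘ₗ f.lTensor C ∘ₗ Coalgebra.comul (R := k)
      = f.rTensor C ∘ₗ Coalgebra.comul (R := k))
    (hfg : conv f g = convUnit k C A) (hgf : conv g f = convUnit k C A) :
    E.ψ ∘ₗ g.lTensor C ∘ₗ Coalgebra.comul (R := k)
      = g.rTensor C ∘ₗ Coalgebra.comul (R := k) := by
  calc E.ψ ∘ₗ g.lTensor C ∘ₗ Coalgebra.comul (R := k)
      = cstar (convUnit k C A) (E.ψ ∘ₗ g.lTensor C ∘ₗ Coalgebra.comul (R := k)) :=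
        (cstar_unit_left _).symm
    _ = cstar (conv g f) (E.ψ ∘ₗ g.lTensor C ∘ₗ Coalgebra.comul (R := k)) := by rw [hgf]
    _ = cstar g (cstar f (E.ψ ∘ₗ g.lTensor C ∘ₗ Coalgebra.comul (R := k))) :=
        cstar_assoc g f _
    _ = cstar g (TensorProduct.mk k A C 1) := by rw [stepA E f g hcolf hfg]
    _ = g.rTensor C ∘ₗ Coalgebra.comul (R := k) := cstar_mk_right g

----------------------------------------------------------------------------------
-- Θ lemmas

lemma Th_unit (ΔA : RComod k C A) : Th ΔA.ρ (convUnit k C A) = LinearMap.id := by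
  ext a
  have key : ∀ z : A ⊗[k] C,
      mul' k A ((convUnit k C A).lTensor A z)
        = TensorProduct.rid k A ((Coalgebra.counit (R := k) (A := C)).lTensor A z) := by
    intro z
    induction z using TensorProduct.induction_on with
    | zero => simp
    | tmul x c =>
      simp [convUnit, mul'_apply, Algebra.algebraMap_eq_smul_one, mul_smul_comm]
    | add u v hu hv => simp only [map_add, hu, hv]
  have h2 := DFunLike.congr_fun ΔA.counit_id a
  simp only [comp_apply, LinearEquiv.coe_coe, id_apply] at h2
  simpa [Th, comp_apply, key (ΔA.ρ a)] using h2

lemma Th_conv (ΔA : RComod k C A) (f g : C →ₗ[k] A)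
    (hcolTf : ΔA.ρ ∘ₗ Th ΔA.ρ f = (Th ΔA.ρ f).rTensor C ∘ₗ ΔA.ρ) :
    Th ΔA.ρ (conv f g) = Th ΔA.ρ g ∘ₗ Th ΔA.ρ f := by
  ext a
  have hρ : ΔA.ρ (Th ΔA.ρ f a) = (Th ΔA.ρ f).rTensor C (ΔA.ρ a) :=
    DFunLike.congr_fun hcolTf a
  have hrt : (Th ΔA.ρ f).rTensor C (ΔA.ρ a)
      = (mul' k A ∘ₗ f.lTensor A).rTensor C (ΔA.ρ.rTensor C (ΔA.ρ a)) := by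
    have : (Th ΔA.ρ f).rTensor C
        = (mul' k A ∘ₗ f.lTensor A).rTensor C ∘ₗ ΔA.ρ.rTensor C := by
      rw [← rTensor_comp]; rfl
    rw [this]; rfl
  have hcoa := DFunLike.congr_fun ΔA.coassoc a
  simp only [comp_apply, LinearEquiv.coe_coe] at hcoa
  have hρρ : ΔA.ρ.rTensor C (ΔA.ρ a)
      = (TensorProduct.assoc k A C C).symm
          ((Coalgebra.comul (R := k) (A := C)).lTensor A (ΔA.ρ a)) := by
    rw [hcoa, LinearEquiv.symm_apply_apply]
  -- key pointwise identity
  have inner : ∀ (x : A) (w : C ⊗[k] C),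
      x * mul' k A (TensorProduct.map f g w)
        = mul' k A (g.lTensor A ((mul' k A ∘ₗ f.lTensor A).rTensor C
            ((TensorProduct.assoc k A C C).symm (x ⊗ₜ[k] w)))) := by
    intro x w
    induction w using TensorProduct.induction_on with
    | zero => simp
    | tmul c₁ c₂ => simp [mul'_apply, mul_assoc]
    | add u v hu hv =>
      simp only [map_add, tmul_add, mul_add, hu, hv]
  have key : ∀ z : A ⊗[k] C,
      mul' k A ((conv f g).lTensor A z)
        = mul' k A (g.lTensor A ((mul' k A ∘ₗ f.lTensor A).rTensor C
            ((TensorProduct.assoc k A C C).symm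
              ((Coalgebra.comul (R := k) (A := C)).lTensor A z)))) := by
    intro z
    induction z using TensorProduct.induction_on with
    | zero => simp
    | tmul x c =>
      have h1 : mul' k A ((conv f g).lTensor A (x ⊗ₜ[k] c))
          = x * mul' k A (TensorProduct.map f g (Coalgebra.comul (R := k) c)) := by
        simp [conv, mul'_apply]
      rw [h1, inner x (Coalgebra.comul (R := k) c)]
      rfl
    | add u v hu hv => simp only [map_add, hu, hv]
  have : Th ΔA.ρ (conv f g) a = mul' k A ((conv f g).lTensor A (ΔA.ρ a)) := rfl
  rw [comp_apply, this, key (ΔA.ρ a), ← hρρ, ← hrt, ← hρ]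
  rfl

----------------------------------------------------------------------------------
-- injectivity of Θ

lemma mu_lT_can (ΔA : RComod k C A) (f : C →ₗ[k] A) (w : A ⊗[k] A) :
    mul' k A ((Th ΔA.ρ f).lTensor A w) = mul' k A (f.lTensor A (canHat ΔA.ρ w)) := by
  induction w using TensorProduct.induction_on with
  | zero => simp
  | tmul a a' =>
    rw [can_tmul, mul_lTensor_ell]
    simp [mul'_apply, Th]
  | add u v hu hv => simp only [map_add, hu, hv]

lemma theta_inj (ΔA : RComod k C A) (hsurj : Function.Surjective (canHat ΔA.ρ))
    (f g : C →ₗ[k] A) (h : Th ΔA.ρ f = Th ΔA.ρ g) : f = g := by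
  ext c
  obtain ⟨x, hx⟩ := hsurj ((1:A) ⊗ₜ[k] c)
  have hf : f c = mul' k A ((Th ΔA.ρ f).lTensor A x) := by
    rw [mu_lT_can, hx]; simp [mul'_apply]
  have hg : g c = mul' k A ((Th ΔA.ρ g).lTensor A x) := by
    rw [mu_lT_can, hx]; simp [mul'_apply]
  rw [hf, hg, h]

----------------------------------------------------------------------------------
-- factorization through the canonical map

lemma rel_le (ΔA : RComod k C A) (F : A →ₗ[k] A)
    (hB : ∀ b ∈ coinvB k ΔA.ρ, ∀ a, F (b*a) = b * F a) :
    relSub k (coinvB k ΔA.ρ) ≤ ker (mul' k A ∘ₗ F.lTensor A) := by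
  rw [relSub, Submodule.span_le]
  rintro x ⟨a, a', b, hb, rfl⟩
  simp only [SetLike.mem_coe, mem_ker, map_sub, comp_apply, lTensor_tmul, mul'_apply]
  rw [hB b hb a', ← mul_assoc, sub_self]

lemma factor (ΔA : RComod k C A) (hsurj : Function.Surjective (canHat ΔA.ρ))
    (hker : LinearMap.ker (canHat ΔA.ρ) = relSub k (coinvB k ΔA.ρ))
    (G : A ⊗[k] A →ₗ[k] A) (hG : relSub k (coinvB k ΔA.ρ) ≤ ker G) :
    ∃ h : A ⊗[k] C →ₗ[k] A, h ∘ₗ canHat ΔA.ρ = G := by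
  have hle : ker (canHat ΔA.ρ) ≤ ker G := by rw [hker]; exact hG
  refine ⟨Submodule.liftQ _ G hle ∘ₗ
    ((canHat ΔA.ρ).quotKerEquivOfSurjective hsurj).symm.toLinearMap, ?_⟩
  apply LinearMap.ext; intro w
  simp only [comp_apply, LinearEquiv.coe_coe]
  have he : (canHat ΔA.ρ).quotKerEquivOfSurjective hsurj (Submodule.Quotient.mk w)
      = canHat ΔA.ρ w := rfl
  rw [← he, LinearEquiv.symm_apply_apply, Submodule.liftQ_apply]

lemma can_ell (ΔA : RComod k C A) (a : A) (w : A ⊗[k] A) :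
    canHat ΔA.ρ ((mulLeft k a).rTensor A w)
      = (mulLeft k a).rTensor C (canHat ΔA.ρ w) := by
  rw [canHat_eq_Wm, Wm_ell]

lemma h_ell (ΔA : RComod k C A) (hsurj : Function.Surjective (canHat ΔA.ρ))
    (h : A ⊗[k] C →ₗ[k] A) (F : A →ₗ[k] A)
    (hh : h ∘ₗ canHat ΔA.ρ = mul' k A ∘ₗ F.lTensor A) (a : A) (z : A ⊗[k] C) :
    h ((mulLeft k a).rTensor C z) = a * h z := by
  obtain ⟨w, rfl⟩ := hsurj z
  rw [← can_ell]
  have h1 := DFunLike.congr_fun hh ((mulLeft k a).rTensor A w)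
  have h2 := DFunLike.congr_fun hh w
  simp only [comp_apply] at h1 h2
  rw [h1, mul_lTensor_ell, h2]

lemma mu_lT_f_eq_h (ΔA : RComod k C A) (hsurj : Function.Surjective (canHat ΔA.ρ))
    (h : A ⊗[k] C →ₗ[k] A) (F : A →ₗ[k] A)
    (hh : h ∘ₗ canHat ΔA.ρ = mul' k A ∘ₗ F.lTensor A) :
    mul' k A ∘ₗ (h ∘ₗ TensorProduct.mk k A C 1).lTensor A = h := by
  apply TensorProduct.ext'
  intro x c
  have hx : x ⊗ₜ[k] c = (mulLeft k x).rTensor C ((1:A) ⊗ₜ[k] c) := by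
    simp
  rw [comp_apply, lTensor_tmul, mul'_apply, comp_apply, TensorProduct.mk_apply]
  rw [hx, h_ell ΔA hsurj h F hh]

lemma Th_f_eq_F (ΔA : RComod k C A) (hsurj : Function.Surjective (canHat ΔA.ρ))
    (h : A ⊗[k] C →ₗ[k] A) (F : A →ₗ[k] A)
    (hh : h ∘ₗ canHat ΔA.ρ = mul' k A ∘ₗ F.lTensor A) :
    Th ΔA.ρ (h ∘ₗ TensorProduct.mk k A C 1) = F := by
  apply LinearMap.ext; intro a
  have h1 : Th ΔA.ρ (h ∘ₗ TensorProduct.mk k A C 1) a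
      = mul' k A ((h ∘ₗ TensorProduct.mk k A C 1).lTensor A (ΔA.ρ a)) := rfl
  have h1' := DFunLike.congr_fun (mu_lT_f_eq_h ΔA hsurj h F hh) (ΔA.ρ a)
  simp only [comp_apply] at h1'
  rw [h1, h1']
  have hρ : ΔA.ρ a = canHat ΔA.ρ ((1:A) ⊗ₜ[k] a) := by
    rw [can_tmul, ellN_one]
  rw [hρ]
  have h2 := DFunLike.congr_fun hh ((1:A) ⊗ₜ[k] a)
  simp only [comp_apply] at h2
  rw [h2, lTensor_tmul, mul'_apply, one_mul]

lemma Wm_can (ΔA : RComod k C A) (q : C →ₗ[k] A ⊗[k] C) (F : A →ₗ[k] A)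
    (hq : ∀ a, Wm q (ΔA.ρ a) = ΔA.ρ (F a)) (w : A ⊗[k] A) :
    Wm q (canHat ΔA.ρ w) = canHat ΔA.ρ (F.lTensor A w) := by
  induction w using TensorProduct.induction_on with
  | zero => simp
  | tmul a a' => rw [can_tmul, Wm_ell, hq, lTensor_tmul, can_tmul]
  | add u v hu hv => simp only [map_add, hu, hv]

lemma colin_of_Aut (E : Entwining k A C) (ΔA : RComod k C A)
    (hE : EntwCompat E (mulRAct k A) ΔA)
    (hsurj : Function.Surjective (canHat ΔA.ρ))
    (f : C →ₗ[k] A) (F : A →ₗ[k] A) (hΘ : Th ΔA.ρ f = F)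
    (hcolF : ΔA.ρ ∘ₗ F = F.rTensor C ∘ₗ ΔA.ρ) :
    E.ψ ∘ₗ f.lTensor C ∘ₗ Coalgebra.comul (R := k)
      = f.rTensor C ∘ₗ Coalgebra.comul (R := k) := by
  have hq1 : ∀ a, Wm (E.ψ ∘ₗ f.lTensor C ∘ₗ Coalgebra.comul (R := k)) (ΔA.ρ a)
      = ΔA.ρ (F a) := by
    intro a; rw [W1 E ΔA hE f a, hΘ]
  have hq2 : ∀ a, Wm (f.rTensor C ∘ₗ Coalgebra.comul (R := k)) (ΔA.ρ a)
      = ΔA.ρ (F a) := by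
    intro a; rw [W2 ΔA f a, hΘ]
    exact (DFunLike.congr_fun hcolF a).symm
  apply LinearMap.ext; intro c
  obtain ⟨x, hx⟩ := hsurj ((1:A) ⊗ₜ[k] c)
  calc (E.ψ ∘ₗ f.lTensor C ∘ₗ Coalgebra.comul (R := k)) c
      = Wm (E.ψ ∘ₗ f.lTensor C ∘ₗ Coalgebra.comul (R := k)) ((1:A) ⊗ₜ[k] c) :=
        (Wm_one _ c).symm
    _ = canHat ΔA.ρ (F.lTensor A x) := by rw [← hx, Wm_can ΔA _ F hq1]
    _ = Wm (f.rTensor C ∘ₗ Coalgebra.comul (R := k)) ((1:A) ⊗ₜ[k] c) := by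
        rw [← hx, Wm_can ΔA _ F hq2]
    _ = (f.rTensor C ∘ₗ Coalgebra.comul (R := k)) c := Wm_one _ c


/-- for a `C`-Galois extension `A(B)^C` with canonical entwining map `ψ`,
the group of left `B`-linear right `C`-colinear automorphisms of `A` (with product
`F·G = G∘F`) is isomorphic, via `f ↦ (a ↦ a₍₀₎ f(a₍₁₎))`, to the group `C(A)` of
convolution invertible maps `f : C → A` with `ψ(c₍₁₎ ⊗ f(c₍₂₎)) = f(c₍₁₎) ⊗ c₍₂₎`,
with the convolution product. -/
theorem statement7 {k A C : Type} [Field k] [Ring A] [Algebra k A]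
    [AddCommGroup C] [Module k C] [Coalgebra k C]
    (ΔA : RComod k C A)
    -- `A(B)^C` is a `C`-Galois extension:
    (hsurj : Function.Surjective (canHat ΔA.ρ))
    (hker : LinearMap.ker (canHat ΔA.ρ) = relSub k (coinvB k ΔA.ρ))
    -- `ψ` is the canonical entwining map (the unique one making `A` entwined):
    (E : Entwining k A C) (hE : EntwCompat E (mulRAct k A) ΔA) :
    let CA : (C →ₗ[k] A) → Prop := fun f =>
      (∃ g, conv f g = convUnit k C A ∧ conv g f = convUnit k C A) ∧
      E.ψ ∘ₗ f.lTensor C ∘ₗ Coalgebra.comul (R := k) =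
        f.rTensor C ∘ₗ Coalgebra.comul (R := k)
    let Θ : (C →ₗ[k] A) → (A →ₗ[k] A) := fun f => mul' k A ∘ₗ f.lTensor A ∘ₗ ΔA.ρ
    let AutP : (A →ₗ[k] A) → Prop := fun F =>
      Function.Bijective F ∧ (∀ b ∈ coinvB k ΔA.ρ, ∀ a, F (b * a) = b * F a) ∧
      ΔA.ρ ∘ₗ F = F.rTensor C ∘ₗ ΔA.ρ
    (∀ f, CA f → AutP (Θ f)) ∧
    (∀ f g, CA f → CA g → Θ f = Θ g → f = g) ∧
    (∀ F, AutP F → ∃ f, CA f ∧ Θ f = F) ∧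
    (∀ f g, CA f → CA g → Θ (conv f g) = Θ g ∘ₗ Θ f) := by
  intro CA Θ AutP
  refine ⟨?_, ?_, ?_, ?_⟩
  · -- part 1
    rintro f ⟨⟨g, hfg, hgf⟩, hcolf⟩
    have hcolg := colin_inv E f g hcolf hfg hgf
    have hcolTf := colinTh E ΔA hE f hcolf
    have hcolTg := colinTh E ΔA hE g hcolg
    have h1 : Th ΔA.ρ g ∘ₗ Th ΔA.ρ f = LinearMap.id := by
      rw [← Th_conv ΔA f g hcolTf, hfg, Th_unit]
    have h2 : Th ΔA.ρ f ∘ₗ Th ΔA.ρ g = LinearMap.id := by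
      rw [← Th_conv ΔA g f hcolTg, hgf, Th_unit]
    have hli : Function.LeftInverse ⇑(Th ΔA.ρ g) ⇑(Th ΔA.ρ f) := fun x => by
      have := DFunLike.congr_fun h1 x
      simpa [comp_apply] using this
    have hri : Function.RightInverse ⇑(Th ΔA.ρ g) ⇑(Th ΔA.ρ f) := fun x => by
      have := DFunLike.congr_fun h2 x
      simpa [comp_apply] using this
    refine ⟨⟨hli.injective, hri.surjective⟩, ?_, hcolTf⟩
    intro b hb a
    have hba : ΔA.ρ (b * a) = (mulLeft k b).rTensor C (ΔA.ρ a) := hb a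
    show mul' k A (f.lTensor A (ΔA.ρ (b*a))) = b * mul' k A (f.lTensor A (ΔA.ρ a))
    rw [hba, mul_lTensor_ell]
  · -- part 2
    intro f g _ _ hfg
    exact theta_inj ΔA hsurj f g hfg
  · -- part 3
    rintro F ⟨hbij, hB, hcolF⟩
    set Finv := (LinearEquiv.ofBijective F hbij).symm.toLinearMap with hFinvdef
    have hFFi : ∀ a, F (Finv a) = a := fun a =>
      (LinearEquiv.ofBijective F hbij).apply_symm_apply a
    have hFiF : ∀ a, Finv (F a) = a := fun a =>
      (LinearEquiv.ofBijective F hbij).symm_apply_apply a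
    have hBinv : ∀ b ∈ coinvB k ΔA.ρ, ∀ a, Finv (b*a) = b * Finv a := by
      intro b hb a
      apply hbij.1
      show F (Finv (b*a)) = F (b * Finv a)
      rw [hFFi, hB b hb, hFFi]
    have hcolFinv : ΔA.ρ ∘ₗ Finv = Finv.rTensor C ∘ₗ ΔA.ρ := by
      have hid : Finv ∘ₗ F = LinearMap.id := by
        apply LinearMap.ext; intro a
        simp only [comp_apply, id_apply]; exact hFiF a
      apply LinearMap.ext; intro a
      simp only [comp_apply]
      have hstep : ΔA.ρ a = F.rTensor C (ΔA.ρ (Finv a)) := by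
        conv_lhs => rw [← hFFi a]
        have := DFunLike.congr_fun hcolF (Finv a)
        simpa [comp_apply] using this
      rw [hstep]
      have h2 : Finv.rTensor C ∘ₗ F.rTensor C = LinearMap.id := by
        rw [← rTensor_comp, hid, rTensor_id]
      have := DFunLike.congr_fun h2 (ΔA.ρ (Finv a))
      simp only [comp_apply, id_apply] at this
      rw [this]
    obtain ⟨h, hh⟩ := factor ΔA hsurj hker (mul' k A ∘ₗ F.lTensor A) (rel_le ΔA F hB)
    obtain ⟨h', hh'⟩ := factor ΔA hsurj hker (mul' k A ∘ₗ Finv.lTensor A)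
      (rel_le ΔA Finv hBinv)
    set f := h ∘ₗ TensorProduct.mk k A C 1 with hfdef
    set g := h' ∘ₗ TensorProduct.mk k A C 1 with hgdef
    have hΘf : Th ΔA.ρ f = F := Th_f_eq_F ΔA hsurj h F hh
    have hΘg : Th ΔA.ρ g = Finv := Th_f_eq_F ΔA hsurj h' Finv hh'
    have hcolf := colin_of_Aut E ΔA hE hsurj f F hΘf hcolF
    have hcolg := colin_of_Aut E ΔA hE hsurj g Finv hΘg hcolFinv
    have hcomp1 : Th ΔA.ρ g ∘ₗ Th ΔA.ρ f = LinearMap.id := by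
      rw [hΘf, hΘg]
      apply LinearMap.ext; intro a
      simp only [comp_apply, id_apply]; exact hFiF a
    have hcomp2 : Th ΔA.ρ f ∘ₗ Th ΔA.ρ g = LinearMap.id := by
      rw [hΘf, hΘg]
      apply LinearMap.ext; intro a
      simp only [comp_apply, id_apply]; exact hFFi a
    have hfg : conv f g = convUnit k C A := by
      apply theta_inj ΔA hsurj
      rw [Th_conv ΔA f g (colinTh E ΔA hE f hcolf), hcomp1, Th_unit]
    have hgf : conv g f = convUnit k C A := by
      apply theta_inj ΔA hsurj
      rw [Th_conv ΔA g f (colinTh E ΔA hE g hcolg), hcomp2, Th_unit]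
    exact ⟨f, ⟨⟨g, hfg, hgf⟩, hcolf⟩, hΘf⟩
  · -- part 4
    rintro f g ⟨_, hcolf⟩ _
    exact Th_conv ΔA f g (colinTh E ΔA hE f hcolf)
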